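/- For every real y, the function g̃(x,y) = 2x·cos(y) − 2x·cosh(x) + (x² + y²)·sinh(x) is monotonically increasing in x on all of ℝ. -/

import Mathlib

open Real

/-- derivative of g̃ in x -/
private lemma hg_deriv (y x : ℝ) :
    HasDerivAt (fun x : ℝ =>
      2 * x * Real.cos y - 2 * x * Real.cosh x + (x ^ 2 + y ^ 2) * Real.sinh x)
      (2 * Real.cos y + (x ^ 2 + y ^ 2 - 2) * Real.cosh x) x := by
  have h1 : HasDerivAt (fun x : ℝ => 2 * x * Real.cos y) (2 * Real.cos y) x := by
    simpa using ((hasDerivAt_id x).const_mul 2).mul_const (Real.cos y)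
  have h2 : HasDerivAt (fun x : ℝ => 2 * x * Real.cosh x)
      (2 * Real.cosh x + 2 * x * Real.sinh x) x := by
    simpa [mul_comm, mul_assoc] using
      (((hasDerivAt_id x).const_mul 2).fun_mul (Real.hasDerivAt_cosh x))
  have h3 : HasDerivAt (fun x : ℝ => (x ^ 2 + y ^ 2) * Real.sinh x)
      (2 * x * Real.sinh x + (x ^ 2 + y ^ 2) * Real.cosh x) x := by
    have hp : HasDerivAt (fun x : ℝ => x ^ 2 + y ^ 2) (2 * x) x := by
      simpa using ((hasDerivAt_pow 2 x).add_const (y ^ 2))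
    simpa using hp.fun_mul (Real.hasDerivAt_sinh x)
  have := (h1.fun_sub h2).fun_add h3
  refine this.congr_deriv ?_
  ring

/-- derivative of f -/
private lemma hf_deriv (y x : ℝ) :
    HasDerivAt (fun x : ℝ => 2 * Real.cos y + (x ^ 2 + y ^ 2 - 2) * Real.cosh x)
      (2 * x * Real.cosh x + (x ^ 2 + y ^ 2 - 2) * Real.sinh x) x := by
  have hp : HasDerivAt (fun x : ℝ => x ^ 2 + y ^ 2 - 2) (2 * x) x := by
    simpa using (((hasDerivAt_pow 2 x).add_const (y ^ 2)).sub_const 2)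
  have := (hasDerivAt_const x (2 * Real.cos y)).fun_add (hp.fun_mul (Real.hasDerivAt_cosh x))
  refine this.congr_deriv ?_
  ring

private lemma hf'_deriv (y x : ℝ) :
    HasDerivAt (fun x : ℝ => 2 * x * Real.cosh x + (x ^ 2 + y ^ 2 - 2) * Real.sinh x)
      ((x ^ 2 + y ^ 2) * Real.cosh x + 4 * x * Real.sinh x) x := by
  have h1 : HasDerivAt (fun x : ℝ => 2 * x * Real.cosh x)
      (2 * Real.cosh x + 2 * x * Real.sinh x) x := by
    simpa [mul_comm, mul_assoc] using
      (((hasDerivAt_id x).const_mul 2).fun_mul (Real.hasDerivAt_cosh x))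
  have hp : HasDerivAt (fun x : ℝ => x ^ 2 + y ^ 2 - 2) (2 * x) x := by
    simpa using (((hasDerivAt_pow 2 x).add_const (y ^ 2)).sub_const 2)
  have h2 : HasDerivAt (fun x : ℝ => (x ^ 2 + y ^ 2 - 2) * Real.sinh x)
      (2 * x * Real.sinh x + (x ^ 2 + y ^ 2 - 2) * Real.cosh x) x := by
    simpa using hp.fun_mul (Real.hasDerivAt_sinh x)
  have := h1.fun_add h2
  refine this.congr_deriv ?_
  nlinarith [Real.cosh_sq x, Real.sinh_sq x]

private lemma x_sinh_nonneg (x : ℝ) : 0 ≤ x * Real.sinh x := by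
  rcases le_or_gt 0 x with h | h
  · have : (0:ℝ) ≤ Real.sinh x := by rw [← Real.sinh_zero]; exact Real.sinh_le_sinh.2 h
    exact mul_nonneg h this
  · have : Real.sinh x ≤ 0 := by rw [← Real.sinh_zero]; exact Real.sinh_le_sinh.2 h.le
    nlinarith

/-- f' is monotone since f'' ≥ 0 -/
private lemma f'_mono (y : ℝ) :
    Monotone (fun x : ℝ => 2 * x * Real.cosh x + (x ^ 2 + y ^ 2 - 2) * Real.sinh x) := by
  apply monotone_of_deriv_nonneg
  · exact fun x => (hf'_deriv y x).differentiableAt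
  · intro x
    rw [(hf'_deriv y x).deriv]
    have h1 : 0 ≤ x * Real.sinh x := x_sinh_nonneg x
    have h2 : (0:ℝ) < Real.cosh x := Real.cosh_pos x
    nlinarith [sq_nonneg x, sq_nonneg y]

/-- f ≥ 0 everywhere -/
private lemma f_nonneg (y x : ℝ) :
    0 ≤ 2 * Real.cos y + (x ^ 2 + y ^ 2 - 2) * Real.cosh x := by
  set f : ℝ → ℝ := fun x => 2 * Real.cos y + (x ^ 2 + y ^ 2 - 2) * Real.cosh x with hf
  have hf0 : 0 ≤ f 0 := by
    have := Real.one_sub_sq_div_two_le_cos (x := y)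
    simp only [hf, Real.cosh_zero]
    nlinarith
  have hderiv0 : (2 : ℝ) * 0 * Real.cosh 0 + (0 ^ 2 + y ^ 2 - 2) * Real.sinh 0 = 0 := by
    simp
  show 0 ≤ f x
  rcases le_or_gt 0 x with h | h
  · -- f monotone on [0, ∞)
    have hmono : MonotoneOn f (Set.Ici 0) := by
      apply monotoneOn_of_deriv_nonneg (convex_Ici 0)
      · exact fun z _ => (hf_deriv y z).differentiableAt.continuousAt.continuousWithinAt
      · exact fun z _ => (hf_deriv y z).differentiableAt.differentiableWithinAt
      · intro z hz
        rw [interior_Ici] at hz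
        rw [(hf_deriv y z).deriv]
        have := f'_mono y (le_of_lt hz : (0:ℝ) ≤ z)
        simpa [hderiv0] using this
    exact hf0.trans (hmono (Set.self_mem_Ici) (Set.mem_Ici.2 h) h)
  · -- f antitone on (-∞, 0]
    have hanti : AntitoneOn f (Set.Iic 0) := by
      apply antitoneOn_of_deriv_nonpos (convex_Iic 0)
      · exact fun z _ => (hf_deriv y z).differentiableAt.continuousAt.continuousWithinAt
      · exact fun z _ => (hf_deriv y z).differentiableAt.differentiableWithinAt
      · intro z hz
        rw [interior_Iic] at hz
        rw [(hf_deriv y z).deriv]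
        have := f'_mono y (le_of_lt hz : z ≤ (0:ℝ))
        simpa [hderiv0] using this
    exact hf0.trans (hanti (Set.mem_Iic.2 h.le) Set.self_mem_Iic h.le)

theorem gtilde_monotone (y : ℝ) :
    Monotone (fun x : ℝ =>
      2 * x * Real.cos y - 2 * x * Real.cosh x + (x ^ 2 + y ^ 2) * Real.sinh x) := by
  apply monotone_of_deriv_nonneg
  · exact fun x => (hg_deriv y x).differentiableAt
  · intro x
    rw [(hg_deriv y x).deriv]
    exact f_nonneg y x
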